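/- Let A be a Hermitian operator on a finite-dimensional complex Hilbert space, with decomposition A = A₊ - A₋ into positive semidefinite operators supported on the positive and negative eigenspaces of A respectively. Then tr[A₊] equals the infimum of tr[T] over all operators T satisfying T ≥ 0 and T ≥ A (in the Loewner order), and this infimum is attained at T = A₊. -/

import Mathlib

open Matrix Complex
open scoped Matrix Kronecker Real ComplexOrder

noncomputable section

/-- The Pauli matrix `σ_x`. -/
def σx : Matrix (Fin 2) (Fin 2) ℂ := !![0, 1; 1, 0]
/-- The Pauli matrix `σ_y`. -/
def σy : Matrix (Fin 2) (Fin 2) ℂ := !![0, -Complex.I; Complex.I, 0]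
/-- The Pauli matrix `σ_z`. -/
def σz : Matrix (Fin 2) (Fin 2) ℂ := !![1, 0; 0, -1]

/-- `U φ = exp(-i φ σ_z)`, the unitary rotation about the z-axis. -/
def U (φ : ℝ) : Matrix (Fin 2) (Fin 2) ℂ :=
  NormedSpace.exp ((-(Complex.I * (φ : ℂ))) • σz)

/-- The rotationally covariant POVM density `M_φ^r = (1/π) U_φ* (𝟙 + r σ_x) U_φ`. -/
def Mpovm (r φ : ℝ) : Matrix (Fin 2) (Fin 2) ℂ :=
  ((π : ℂ))⁻¹ • ((U φ)ᴴ * ((1 : Matrix (Fin 2) (Fin 2) ℂ) + (r : ℂ) • σx) * U φ)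

/-- A density matrix: positive semidefinite with unit trace. -/
def IsDensity {n : Type*} [Fintype n] [DecidableEq n] (ρ : Matrix n n ℂ) : Prop :=
  ρ.PosSemidef ∧ ρ.trace = 1

/-- The singlet vector `|Ψ⁻⟩ = (|01⟩ - |10⟩)/√2`. -/
def ψminus : Fin 2 × Fin 2 → ℂ := fun p =>
  if p = (0, 1) then (Real.sqrt 2)⁻¹ else if p = (1, 0) then -(Real.sqrt 2)⁻¹ else 0

/-- The projector `|Ψ⁻⟩⟨Ψ⁻|`. -/
def singletProj : Matrix (Fin 2 × Fin 2) (Fin 2 × Fin 2) ℂ :=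
  Matrix.vecMulVec ψminus (fun j => (starRingEnd ℂ) (ψminus j))

/-- The Werner state `W_f = f |Ψ⁻⟩⟨Ψ⁻| + ((1-f)/4) 𝟙₄`. -/
def Werner (f : ℝ) : Matrix (Fin 2 × Fin 2) (Fin 2 × Fin 2) ℂ :=
  (f : ℂ) • singletProj + (((1 - f) / 4 : ℝ) : ℂ) • (1 : Matrix (Fin 2 × Fin 2) (Fin 2 × Fin 2) ℂ)


lemma trace_re_nonneg' {n : ℕ} {X : Matrix (Fin n) (Fin n) ℂ} (hX : X.PosSemidef) :
    0 ≤ X.trace.re := by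
  have h : ∀ i, 0 ≤ (X i i).re := by
    intro i
    have := hX.dotProduct_mulVec_nonneg (Pi.single i 1)
    have h2 : star (Pi.single i 1 : Fin n → ℂ) ⬝ᵥ (X *ᵥ Pi.single i 1) = X i i := by
      simp [dotProduct, mulVec, Pi.single_apply]
    rw [h2] at this
    exact (Complex.le_def.mp this).1
  rw [Matrix.trace, Complex.re_sum]
  exact Finset.sum_nonneg fun i _ => h i

section
open scoped MatrixOrder

def Matrix.PosSemidef.sqrt {n : ℕ} {X : Matrix (Fin n) (Fin n) ℂ} (_ : X.PosSemidef) :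
    Matrix (Fin n) (Fin n) ℂ := CFC.sqrt X

lemma Matrix.PosSemidef.posSemidef_sqrt {n : ℕ} {X : Matrix (Fin n) (Fin n) ℂ}
    (hX : X.PosSemidef) : hX.sqrt.PosSemidef := (CFC.sqrt_nonneg X).posSemidef

lemma Matrix.PosSemidef.sqrt_mul_self {n : ℕ} {X : Matrix (Fin n) (Fin n) ℂ}
    (hX : X.PosSemidef) : hX.sqrt * hX.sqrt = X := CFC.sqrt_mul_sqrt_self X hX.nonneg

end

lemma trace_mul_re_nonneg' {n : ℕ} {X Y : Matrix (Fin n) (Fin n) ℂ}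
    (hX : X.PosSemidef) (hY : Y.PosSemidef) : 0 ≤ (X * Y).trace.re := by
  have hs := hX.posSemidef_sqrt
  have hsq : hX.sqrt * hX.sqrt = X := hX.sqrt_mul_self
  have : (X * Y).trace = (hX.sqrt * Y * hX.sqrt).trace := by
    conv_lhs => rw [← hsq]
    rw [Matrix.mul_assoc, Matrix.trace_mul_comm, Matrix.mul_assoc]
  rw [this]
  have hP : (hX.sqrt * Y * hX.sqrtᴴ).PosSemidef := hY.mul_mul_conjTranspose_same _
  rw [hs.1] at hP
  exact trace_re_nonneg' hP

/-- for Hermitian `A = A₊ - A₋` with `A₊, A₋ ⪰ 0` supported on orthogonal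
eigenspaces (`A₊ A₋ = 0`), `tr A₊` is the least value of `tr T` over `{T | T ⪰ 0, T ⪰ A}`,
attained at `T = A₊`. -/
theorem trace_posPart_isLeast {n : ℕ} (A Apos Aneg : Matrix (Fin n) (Fin n) ℂ)
    (hA : A.IsHermitian) (hpos : Apos.PosSemidef) (hneg : Aneg.PosSemidef)
    (hdec : A = Apos - Aneg) (hsupp : Apos * Aneg = 0) :
    IsLeast {t : ℝ | ∃ T : Matrix (Fin n) (Fin n) ℂ,
        T.PosSemidef ∧ (T - A).PosSemidef ∧ T.trace.re = t} Apos.trace.re := by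
  classical
  constructor
  · exact ⟨Apos, hpos, by rw [hdec, sub_sub_cancel]; exact hneg, rfl⟩
  · rintro t ⟨T, hT, hTA, rfl⟩
    have hAp := hpos.1
    set V : Matrix (Fin n) (Fin n) ℂ := (hAp.eigenvectorUnitary : Matrix (Fin n) (Fin n) ℂ) with hV
    set d : Fin n → ℝ := hAp.eigenvalues with hd
    have hVV : V * star V = 1 := (Matrix.mem_unitaryGroup_iff).mp hAp.eigenvectorUnitary.2
    have hVV' : star V * V = 1 := (Matrix.mem_unitaryGroup_iff').mp hAp.eigenvectorUnitary.2
    set D : Matrix (Fin n) (Fin n) ℂ := diagonal (fun i => (d i : ℂ)) with hD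
    have hspec : Apos = V * D * star V := by
      have := hAp.spectral_theorem
      simp only [Unitary.conjStarAlgAut_apply, Unitary.coe_star] at this
      exact this
    set e : Fin n → ℂ := fun i => if d i = 0 then 0 else 1 with he
    set g : Fin n → ℂ := fun i => if d i = 0 then 0 else ((d i : ℂ))⁻¹ with hg
    set P : Matrix (Fin n) (Fin n) ℂ := V * diagonal e * star V with hP
    set Q : Matrix (Fin n) (Fin n) ℂ := V * diagonal g * star V with hQ
    -- P * Apos = Apos
    have heD : diagonal e * D = D := by
      have hfun : (fun i => e i * (d i : ℂ)) = fun i => (d i : ℂ) := by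
        funext i
        by_cases h : d i = 0 <;> simp [he, h]
      rw [hD, diagonal_mul_diagonal, hfun]
    have hPApos : P * Apos = Apos := by
      rw [hP, hspec]
      calc V * diagonal e * star V * (V * D * star V)
          = V * (diagonal e * ((star V * V) * (D * star V))) := by
            simp only [Matrix.mul_assoc]
        _ = V * (diagonal e * D) * star V := by
            rw [hVV', Matrix.one_mul]; simp only [Matrix.mul_assoc]
        _ = V * D * star V := by rw [heD]
    -- P = Apos * Q
    have hDg : D * diagonal g = diagonal e := by
      have hfun : (fun i => (d i : ℂ) * g i) = e := by
        funext i
        by_cases h : d i = 0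
        · simp [he, hg, h]
        · have h2 : (d i : ℂ) ≠ 0 := Complex.ofReal_ne_zero.mpr h
          simp [he, hg, h, mul_inv_cancel₀ h2]
      rw [hD, diagonal_mul_diagonal, hfun]
    have hPQ : P = Apos * Q := by
      rw [hP, hQ, hspec]
      symm
      calc V * D * star V * (V * diagonal g * star V)
          = V * (D * ((star V * V) * (diagonal g * star V))) := by
            simp only [Matrix.mul_assoc]
        _ = V * (D * diagonal g) * star V := by
            rw [hVV', Matrix.one_mul]; simp only [Matrix.mul_assoc]
        _ = V * diagonal e * star V := by rw [hDg]
    have hnegpos : Aneg * Apos = 0 := by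
      have := congrArg conjTranspose hsupp
      simpa [conjTranspose_mul, hpos.1.eq, hneg.1.eq] using this
    have hAnegP : Aneg * P = 0 := by
      rw [hPQ, ← Matrix.mul_assoc, hnegpos, Matrix.zero_mul]
    -- positivity of P and 1 - P
    have hPpsd : P.PosSemidef := by
      have hde : 0 ≤ e := by
        intro i
        by_cases h : d i = 0 <;> simp [he, h]
      have := (Matrix.PosSemidef.diagonal hde).mul_mul_conjTranspose_same V
      rwa [← Matrix.star_eq_conjTranspose] at this
    have h1Ppsd : (1 - P).PosSemidef := by
      have h1 : (1 : Matrix (Fin n) (Fin n) ℂ) - P = V * diagonal (fun i => 1 - e i) * star V := by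
        have : diagonal (fun i => 1 - e i) = 1 - diagonal e := by
          rw [← diagonal_one, diagonal_sub]
        rw [this, Matrix.mul_sub, Matrix.mul_one, Matrix.sub_mul, hVV, hP]
      rw [h1]
      have hde : 0 ≤ fun i => 1 - e i := by
        intro i
        by_cases h : d i = 0 <;> simp [he, h]
      have := (Matrix.PosSemidef.diagonal hde).mul_mul_conjTranspose_same V
      rwa [← Matrix.star_eq_conjTranspose] at this
    -- trace computations
    have key1 : 0 ≤ ((1 - P) * T).trace.re := trace_mul_re_nonneg' h1Ppsd hT
    have key2 : 0 ≤ (P * (T - A)).trace.re := trace_mul_re_nonneg' hPpsd hTA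
    have e1 : T.trace.re = (P * T).trace.re + ((1 - P) * T).trace.re := by
      rw [← Complex.add_re, ← trace_add, ← Matrix.add_mul]
      simp
    have e2 : (P * A).trace = Apos.trace := by
      rw [hdec, Matrix.mul_sub, trace_sub, hPApos, Matrix.trace_mul_comm, hAnegP, trace_zero,
        sub_zero]
    have e3 : (P * (T - A)).trace.re = (P * T).trace.re - Apos.trace.re := by
      rw [Matrix.mul_sub, trace_sub, Complex.sub_re, e2]
    linarith
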